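/- The vectors {E*_v|_{V_2}}_{v∈V_2} ⊂ Q^{V_2} are linearly independent over Q, and every y ∈ Q^{V_2} with z_{V_2}(y) ≠ 0 (i.e., every element of the support of the reduced Poincaré series Z(t_{V_2})) can be written, in a unique way, as y = Σ_{v∈V_2} r_v·(E*_v|_{V_2}) with r_v ∈ Q and r_v ≥ 0 for all v ∈ V_2. -/

import Mathlib

open Matrix

open scoped Classical

noncomputable section

namespace Plumbing

variable {V : Type*} [Fintype V] [DecidableEq V]

/-- The rational matrix associated with the integral intersection matrix. -/
def Aq (A : Matrix V V ℤ) : Matrix V V ℚ := A.map fun n => (n : ℚ)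

/-- Negative definiteness of the intersection form. -/
def NegDef (A : Matrix V V ℤ) : Prop :=
  ∀ x : V → ℚ, x ≠ 0 → x ⬝ᵥ (Aq A).mulVec x < 0

/-- The dual base element `E*_v`, the `v`-th column of `−A⁻¹`. -/
def Estar (A : Matrix V V ℤ) (v : V) : V → ℚ := fun w => (-(Aq A)⁻¹) w v

/-- Membership in the dual lattice `L' = {x ∈ ℚ^V : Ax ∈ ℤ^V}`. -/
def memLp (A : Matrix V V ℤ) (x : V → ℚ) : Prop :=
  ∀ v, ∃ n : ℤ, (Aq A).mulVec x v = (n : ℚ)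

/-- `x` and `y` are in the same class of `H = L'/L`, i.e. `x - y ∈ L`. -/
def sameClass {W : Type*} (x y : W → ℚ) : Prop := ∀ w, ∃ n : ℤ, x w - y w = (n : ℚ)

/-- The valency of a vertex. -/
def deg {W : Type*} (G : SimpleGraph W) (w : W) : ℕ := (G.neighborSet w).ncard

/-- The coefficients `c_v(k)`. -/
def ccoef (d k : ℕ) : ℤ :=
  if 2 ≤ d then (-1 : ℤ) ^ k * (Nat.choose (d - 2) k) else (Nat.choose (k + 1 - d) k)

/-- The coefficient `z(l')` of the multivariable series `Z(t)`. -/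
def zcoef (A : Matrix V V ℤ) (δ : V → ℕ) (l' : V → ℚ) : ℤ :=
  ∑ᶠ k : V → ℕ,
    if (∑ v, (k v : ℚ) • Estar A v) = l' then ∏ v, ccoef (δ v) (k v) else 0

/-- The counting function `Q_{[x]}(x)`. -/
def Qcount (A : Matrix V V ℤ) (δ : V → ℕ) (x : V → ℚ) : ℤ :=
  ∑ᶠ l' : V → ℚ,
    if memLp A l' ∧ sameClass l' x ∧ ¬ x ≤ l' then zcoef A δ l' else 0

/-- The counting function `Q_{[x],I}(x)` of the reduced series. -/
def QcountI (A : Matrix V V ℤ) (δ : V → ℕ) (I : Set V) (x : V → ℚ) : ℤ :=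
  ∑ᶠ l' : V → ℚ,
    if memLp A l' ∧ sameClass l' x ∧ ¬ (∀ v ∈ I, x v ≤ l' v) then zcoef A δ l' else 0

/-- The counting function `Q_{0,I}(x)` on the integral lattice. -/
def QcountI0 (A : Matrix V V ℤ) (δ : V → ℕ) (I : Set V) (x : V → ℤ) : ℤ :=
  ∑ᶠ l : V → ℤ,
    if ¬ (∀ v ∈ I, x v ≤ l v) then zcoef A δ (fun v => (l v : ℚ)) else 0

/-- The modified counting function `q_{[x],J}(x)`. -/
def qmod (A : Matrix V V ℤ) (δ : V → ℕ) (J : Set V) (x : V → ℚ) : ℤ :=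
  ∑ᶠ l' : V → ℚ,
    if memLp A l' ∧ sameClass l' x ∧ (∀ v ∈ J, l' v < x v) then zcoef A δ l' else 0

/-- The coefficient function of the reduced series `Z(t_W)`. -/
def zred (A : Matrix V V ℤ) (δ : V → ℕ) (W : Set V) (y : W → ℚ) : ℤ :=
  ∑ᶠ l' : V → ℚ, if (fun w : W => l' w.1) = y then zcoef A δ l' else 0

/-- The intersection matrix of a full subgraph. -/
def subM (A : Matrix V V ℤ) (W : Set V) : Matrix W W ℤ :=
  A.submatrix Subtype.val Subtype.val

/-- The restriction operator `j*_W : L'(T) → L'(T(W))`. -/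
def jstar (A : Matrix V V ℤ) (W : Set V) (l' : V → ℚ) : W → ℚ :=
  (Aq (subM A W))⁻¹.mulVec fun w => (Aq A).mulVec l' w.1

/-- The canonical cycle `K`, the unique solution of `(K + E_v, E_v) = -2`. -/
def Kcan (A : Matrix V V ℤ) : V → ℚ :=
  (Aq A)⁻¹.mulVec fun v => (-2 : ℚ) - (A v v : ℚ)

/-- The Riemann–Roch expression `χ(x) = -(x, x + K)/2`. -/
def chi (A : Matrix V V ℤ) (x : V → ℚ) : ℚ :=
  -(x ⬝ᵥ (Aq A).mulVec (x + Kcan A)) / 2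

/-- The weight `w(l, J)` of the lattice cube `(l, J)`. -/
def wcube (A : Matrix V V ℤ) (l : V → ℤ) (J : Finset V) : ℚ :=
  J.powerset.sup' ⟨∅, Finset.empty_mem_powerset J⟩
    fun J' => chi A fun v => (l v : ℚ) + if v ∈ J' then 1 else 0

/-- Quasipolynomials on `ℤ^W`: polynomial on each coset of a finite index subgroup. -/
def IsQuasiPoly {W : Type*} [Fintype W] (Q : (W → ℤ) → ℚ) : Prop :=
  ∃ Λ : AddSubgroup (W → ℤ), Λ.index ≠ 0 ∧
    ∀ c : W → ℤ, ∃ p : MvPolynomial W ℚ,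
      ∀ l ∈ Λ, Q (c + l) = MvPolynomial.eval (fun w => ((c + l) w : ℚ)) p

/-- The vertex set of the connected component `c` of the complement of `I`. -/
def compSet (G : SimpleGraph V) (I : Set V) (c : (G.induce Iᶜ).ConnectedComponent) :
    Set V :=
  {v : V | ∃ h : v ∈ (Iᶜ : Set V), (G.induce Iᶜ).connectedComponentMk ⟨v, h⟩ = c}

/-- The boundary of a subset `V2` of the vertices. -/
def Bdry (G : SimpleGraph V) (V2 : Set V) : Set V :=
  {u ∈ V2 | ∃ w, w ∉ V2 ∧ G.Adj u w}

/-- `V_{1,u}` : the vertex `u` together with the vertex sets of all connected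
components of the complement of `V2` adjacent to `u`. -/
def V1u (G : SimpleGraph V) (V2 : Set V) (u : V) : Set V :=
  insert u {v : V | ∃ h : v ∈ (V2ᶜ : Set V), ∃ w, ∃ hw : w ∈ (V2ᶜ : Set V),
    G.Adj u w ∧ (G.induce V2ᶜ).connectedComponentMk ⟨v, h⟩ =
      (G.induce V2ᶜ).connectedComponentMk ⟨w, hw⟩}

end Plumbing

open Plumbing


section Statement5Aux

open Matrix

private lemma sum_ext5 {V : Type*} [Fintype V] {M : Type*} [AddCommMonoid M]
    (S : Set V) [Fintype S] (g : V → M) (hg : ∀ u, u ∉ S → g u = 0) :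
    ∑ u : V, g u = ∑ u : S, g u.1 := by
  classical
  rw [← Finset.sum_subtype S.toFinset (fun x => Set.mem_toFinset) g]
  exact (Finset.sum_subset (Finset.subset_univ _)
    (fun x _ hx => hg x (fun hxS => hx (Set.mem_toFinset.2 hxS)))).symm

private lemma det_isUnit_of_negdef5 {V : Type*} [Fintype V] [DecidableEq V] (M : Matrix V V ℚ)
    (h : ∀ x : V → ℚ, x ≠ 0 → x ⬝ᵥ M.mulVec x < 0) : IsUnit M.det := by
  rw [isUnit_iff_ne_zero]
  intro hdet
  obtain ⟨x, hx, hMx⟩ := Matrix.exists_mulVec_eq_zero_iff.2 hdet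
  have h2 := h x hx
  rw [hMx, dotProduct_zero] at h2
  exact lt_irrefl 0 h2

private lemma factP5 {V : Type*} [Fintype V] [DecidableEq V] (M : Matrix V V ℚ)
    (hoff : ∀ i j, i ≠ j → 0 ≤ M i j)
    (hneg : ∀ x : V → ℚ, x ≠ 0 → x ⬝ᵥ M.mulVec x < 0)
    (x : V → ℚ) (hx : ∀ i, M.mulVec x i ≤ 0) : ∀ i, 0 ≤ x i := by
  set xp : V → ℚ := fun i => max (x i) 0 with hxp
  set xm : V → ℚ := fun i => max (-x i) 0 with hxm
  have hsplit : x = xp - xm := by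
    funext i
    simp only [Pi.sub_apply, hxp, hxm]
    rcases le_total (x i) 0 with h | h
    · rw [max_eq_right h, max_eq_left (by linarith)]; ring
    · rw [max_eq_left h, max_eq_right (by linarith)]; ring
  have hxm0 : xm = 0 := by
    by_contra hne
    have h1 : xm ⬝ᵥ M.mulVec xm < 0 := hneg xm hne
    have h2 : 0 ≤ xm ⬝ᵥ M.mulVec xp := by
      rw [dotProduct]
      apply Finset.sum_nonneg
      intro i _
      rw [mulVec, dotProduct, Finset.mul_sum]
      apply Finset.sum_nonneg
      intro j _
      by_cases hij : i = j
      · subst hij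
        have hz : xm i * xp i = 0 := by
          rcases le_total (x i) 0 with h | h
          · have : xp i = 0 := max_eq_right h
            rw [this, mul_zero]
          · have : xm i = 0 := max_eq_right (by linarith)
            rw [this, zero_mul]
        have h0 : xm i * (M i i * xp i) = 0 := by
          have h' : xm i * (M i i * xp i) = M i i * (xm i * xp i) := by ring
          rw [h', hz, mul_zero]
        exact le_of_eq h0.symm
      · have h1 : (0:ℚ) ≤ xm i := le_max_right _ _
        have h2 : (0:ℚ) ≤ xp j := le_max_right _ _
        have h3 := hoff i j hij
        positivity
    have h3 : xm ⬝ᵥ M.mulVec x ≤ 0 := by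
      rw [dotProduct]
      apply Finset.sum_nonpos
      intro i _
      exact mul_nonpos_of_nonneg_of_nonpos (le_max_right _ _) (hx i)
    have h4 : xm ⬝ᵥ M.mulVec x = xm ⬝ᵥ M.mulVec xp - xm ⬝ᵥ M.mulVec xm := by
      conv_lhs => rw [hsplit]
      rw [mulVec_sub, dotProduct_sub]
    linarith
  intro i
  have h5 : max (-x i) 0 = 0 := congrFun hxm0 i
  have h6 : -x i ≤ 0 := by rw [← h5]; exact le_max_left _ _
  linarith

private lemma estar_mulVec5 {W : Type*} [Fintype W] [DecidableEq W] (M : Matrix W W ℤ)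
    (hdet : IsUnit (Aq M).det) (v : W) :
    (Aq M).mulVec (Estar M v) = -(Pi.single v 1) := by
  have h1 : Estar M v = (-(Aq M)⁻¹).mulVec (Pi.single v 1) := by
    funext w
    simp [Estar, mulVec_single]
  rw [h1, mulVec_mulVec, Matrix.mul_neg, Matrix.mul_nonsing_inv _ hdet, neg_mulVec, one_mulVec]

private lemma eq_sum_estar5 {W : Type*} [Fintype W] [DecidableEq W] (M : Matrix W W ℤ)
    (hdet : IsUnit (Aq M).det) (x : W → ℚ) :
    x = ∑ v, (-((Aq M).mulVec x v)) • Estar M v := by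
  funext u
  rw [Finset.sum_apply]
  simp only [Pi.smul_apply, smul_eq_mul]
  have h1 : ∀ v, -((Aq M).mulVec x v) * Estar M v u
      = (-(Aq M)⁻¹) u v * (-((Aq M).mulVec x)) v := by
    intro v
    simp only [Estar, Pi.neg_apply]
    ring
  rw [Finset.sum_congr rfl (fun v _ => h1 v)]
  have h2 : ∑ v, (-(Aq M)⁻¹) u v * (-((Aq M).mulVec x)) v
      = ((-(Aq M)⁻¹).mulVec (-((Aq M).mulVec x))) u := by
    rw [mulVec, dotProduct]
  rw [h2, mulVec_neg, neg_mulVec, neg_neg, mulVec_mulVec, Matrix.nonsing_inv_mul _ hdet,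
    one_mulVec]

/-- Key lemma: the restriction to `V2` of any dual base element `E*_v` is a nonnegative
rational combination of the restrictions `E*_w|_{V2}`, `w ∈ V2`. -/
private lemma key_nonneg_combo5 {V : Type*} [Fintype V] [DecidableEq V]
    (A : Matrix V V ℤ)
    (hoff : ∀ v w : V, v ≠ w → 0 ≤ A v w)
    (hAneg : NegDef A) (V2 : Set V) (v : V) :
    ∃ s : V2 → ℚ, (∀ w, 0 ≤ s w) ∧
      ∀ u : V2, Estar A v u.1 = ∑ w : V2, s w * Estar A w.1 u.1 := by
  have hQoff : ∀ i j : V, i ≠ j → 0 ≤ Aq A i j := by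
    intro i j h
    have := hoff i j h
    simp only [Aq, Matrix.map_apply]
    exact_mod_cast this
  have hQdet : IsUnit (Aq A).det := det_isUnit_of_negdef5 _ hAneg
  by_cases hv : v ∈ V2
  · refine ⟨fun w => if w = ⟨v, hv⟩ then 1 else 0, fun w => by positivity, fun u => ?_⟩
    rw [Finset.sum_congr rfl (fun w _ => by rw [ite_mul, one_mul, zero_mul]),
      Finset.sum_ite_eq' Finset.univ (⟨v, hv⟩ : V2) (fun w : V2 => Estar A w.1 u.1)]
    simp
  · have hv' : v ∈ (V2ᶜ : Set V) := hv
    set B : Matrix (V2ᶜ : Set V) (V2ᶜ : Set V) ℚ := Aq (subM A V2ᶜ) with hBdef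
    have hmv : ∀ (x : (V2ᶜ : Set V) → ℚ) (i : (V2ᶜ : Set V)),
        ((Aq A).mulVec (fun u => if h : u ∈ (V2ᶜ : Set V) then x ⟨u, h⟩ else 0)) i.1
          = (B.mulVec x) i := by
      intro x i
      simp only [mulVec, dotProduct]
      rw [sum_ext5 (V2ᶜ : Set V)
        (fun j => Aq A i.1 j * (if h : j ∈ (V2ᶜ : Set V) then x ⟨j, h⟩ else 0))
        (fun j hj => by simp only [dif_neg hj, mul_zero])]
      exact Finset.sum_congr rfl (fun j _ => by rw [dif_pos j.2]; rfl)
    have hBneg : ∀ x : (V2ᶜ : Set V) → ℚ, x ≠ 0 → x ⬝ᵥ B.mulVec x < 0 := by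
      intro x hx
      set xe : V → ℚ := fun u => if h : u ∈ (V2ᶜ : Set V) then x ⟨u, h⟩ else 0 with hxe
      have hxe0 : ∀ u, u ∉ (V2ᶜ : Set V) → xe u = 0 := fun u hu => dif_neg hu
      have hxev : ∀ i : (V2ᶜ : Set V), xe i.1 = x i := fun i => dif_pos i.2
      have hxene : xe ≠ 0 := by
        obtain ⟨i, hi⟩ := Function.ne_iff.1 hx
        intro h0
        apply hi
        rw [← hxev i, h0]
        rfl
      have hquad : xe ⬝ᵥ (Aq A).mulVec xe = x ⬝ᵥ B.mulVec x := by
        rw [dotProduct, sum_ext5 (V2ᶜ : Set V) (fun u => xe u * ((Aq A).mulVec xe) u)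
          (fun u hu => by show xe u * ((Aq A).mulVec xe) u = 0; rw [hxe0 u hu, zero_mul]), dotProduct]
        exact Finset.sum_congr rfl (fun i _ => by
          show xe i.1 * ((Aq A).mulVec xe) i.1 = x i * (B.mulVec x) i
          rw [hxev i, hxe, hmv x i])
      have := hAneg xe hxene
      rw [hquad] at this
      exact this
    have hBoff : ∀ i j : (V2ᶜ : Set V), i ≠ j → 0 ≤ B i j :=
      fun i j hij => hQoff i.1 j.1 (fun h => hij (Subtype.ext h))
    have hBdet : IsUnit B.det := det_isUnit_of_negdef5 B hBneg
    set g : (V2ᶜ : Set V) → ℚ := Estar (subM A V2ᶜ) ⟨v, hv'⟩ with hgdef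
    have hBg : B.mulVec g = -(Pi.single (⟨v, hv'⟩ : (V2ᶜ : Set V)) 1) :=
      estar_mulVec5 _ hBdet _
    have hg : ∀ i, 0 ≤ g i := by
      apply factP5 B hBoff hBneg
      intro i
      rw [hBg]
      by_cases h : i = (⟨v, hv'⟩ : (V2ᶜ : Set V)) <;> simp [Pi.single_apply, h]
    set ge : V → ℚ := fun u => if h : u ∈ (V2ᶜ : Set V) then g ⟨u, h⟩ else 0 with hgedef
    have hge0 : ∀ u, u ∉ (V2ᶜ : Set V) → ge u = 0 := fun u hu => dif_neg hu
    set z : V → ℚ := Estar A v - ge with hzdef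
    set c : V → ℚ := fun u => -((Aq A).mulVec z u) with hcdef
    have hcomb : z = ∑ u : V, c u • Estar A u := eq_sum_estar5 A hQdet z
    have hc_out : ∀ u, u ∉ V2 → c u = 0 := by
      intro u hu
      have hu' : u ∈ (V2ᶜ : Set V) := hu
      simp only [hcdef, hzdef, neg_eq_zero]
      rw [mulVec_sub, Pi.sub_apply, estar_mulVec5 A hQdet v]
      have h1 : ((Aq A).mulVec ge) u = (B.mulVec g) ⟨u, hu'⟩ := hmv g ⟨u, hu'⟩
      rw [h1, hBg]
      simp only [Pi.neg_apply, Pi.single_apply]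
      have : u = v ↔ (⟨u, hu'⟩ : (V2ᶜ : Set V)) = ⟨v, hv'⟩ := by
        constructor
        · intro h; exact Subtype.ext h
        · intro h; exact congrArg Subtype.val h
      by_cases h : u = v
      · rw [if_pos h, if_pos (this.1 h)]; ring
      · rw [if_neg h, if_neg (fun hh => h (this.2 hh))]; ring
    have hsval : ∀ w : V2, c w.1 = ((Aq A).mulVec ge) w.1 := by
      intro w
      simp only [hcdef, hzdef]
      rw [mulVec_sub, Pi.sub_apply, estar_mulVec5 A hQdet v]
      have hwv : w.1 ≠ v := fun h => hv (h ▸ w.2)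
      simp only [Pi.neg_apply, Pi.single_apply, if_neg hwv]
      ring
    refine ⟨fun w => c w.1, ?_, ?_⟩
    · intro w
      dsimp only
      rw [hsval w]
      simp only [mulVec, dotProduct]
      apply Finset.sum_nonneg
      intro j _
      by_cases hj : j ∈ (V2ᶜ : Set V)
      · have hwj : w.1 ≠ j := fun h => hj (h ▸ w.2)
        have := hQoff w.1 j hwj
        have h2 : 0 ≤ ge j := by rw [hgedef]; simp only; rw [dif_pos hj]; exact hg _
        positivity
      · rw [hge0 j hj, mul_zero]
    · intro u
      have hgeu : ge u.1 = 0 := hge0 u.1 (fun h => h u.2)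
      have h1 : Estar A v u.1 = z u.1 := by
        simp only [hzdef, Pi.sub_apply, hgeu, sub_zero]
      rw [h1]
      have h2 := congrFun hcomb u.1
      rw [Finset.sum_apply] at h2
      rw [h2, sum_ext5 V2 (fun w => (c w • Estar A w) u.1)
        (fun w hw => by simp only [Pi.smul_apply, hc_out w hw, zero_smul])]
      exact Finset.sum_congr rfl (fun w _ => by dsimp only; rw [Pi.smul_apply, smul_eq_mul])

end Statement5Aux

/-- the restrictions `E*_v|_{V₂}`, `v ∈ V₂`, are linearly independent, and
every element of the support of the reduced series `Z(t_{V₂})` is, in a unique way, a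
nonnegative rational combination of them. -/
theorem statement5 (V : Type) [Fintype V] [DecidableEq V]
    (G : SimpleGraph V) (hG : G.IsTree)
    (A : Matrix V V ℤ) (hAsymm : A.IsSymm)
    (hAadj : ∀ v w : V, v ≠ w → A v w = if G.Adj v w then 1 else 0)
    (hAneg : NegDef A)
    (V2 : Set V) (hV2conn : (G.induce V2).Connected) :
    LinearIndependent ℚ (fun v : V2 => fun w : V2 => Estar A v.1 w.1) ∧
    ∀ y : V2 → ℚ, zred A (deg G) V2 y ≠ 0 →
      ∃! r : V2 → ℚ, (∀ v, 0 ≤ r v) ∧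
        y = ∑ v : V2, r v • fun w : V2 => Estar A v.1 w.1 := by
  have hoff : ∀ v w : V, v ≠ w → 0 ≤ A v w := by
    intro v w h
    rw [hAadj v w h]
    split <;> norm_num
  have hQdet : IsUnit (Aq A).det := det_isUnit_of_negdef5 _ hAneg
  have lin : LinearIndependent ℚ (fun v : V2 => fun w : V2 => Estar A v.1 w.1) := by
    rw [Fintype.linearIndependent_iff]
    intro g hg i
    set x : V → ℚ := ∑ v : V2, g v • Estar A v.1 with hxdef
    have hxV2 : ∀ u : V2, x u.1 = 0 := by
      intro u
      have h1 := congrFun hg u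
      rw [Finset.sum_apply, Pi.zero_apply] at h1
      rw [hxdef, Finset.sum_apply, ← h1]
      exact Finset.sum_congr rfl (fun v _ => rfl)
    have hQx : (Aq A).mulVec x = ∑ v : V2, g v • (-(Pi.single v.1 1) : V → ℚ) := by
      have hlin : (Aq A).mulVecLin x = ∑ v : V2, g v • ((Aq A).mulVecLin (Estar A v.1)) := by
        rw [hxdef, map_sum]
        exact Finset.sum_congr rfl (fun v _ => map_smul _ _ _)
      rw [show (Aq A).mulVec x = (Aq A).mulVecLin x from rfl, hlin]
      exact Finset.sum_congr rfl (fun v _ => by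
        rw [Matrix.mulVecLin_apply, estar_mulVec5 A hQdet v.1])
    have hQx_out : ∀ u, u ∉ V2 → ((Aq A).mulVec x) u = 0 := by
      intro u hu
      rw [hQx, Finset.sum_apply]
      apply Finset.sum_eq_zero
      intro v _
      have huv : u ≠ v.1 := fun h => hu (h ▸ v.2)
      simp [Pi.single_apply, huv]
    have hx0 : x = 0 := by
      by_contra h
      have h1 := hAneg x h
      have hzero : x ⬝ᵥ (Aq A).mulVec x = 0 := by
        rw [dotProduct]
        apply Finset.sum_eq_zero
        intro u _
        by_cases hu : u ∈ V2
        · rw [hxV2 ⟨u, hu⟩, zero_mul]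
        · rw [hQx_out u hu, mul_zero]
      rw [hzero] at h1
      exact lt_irrefl 0 h1
    have hsum0 : ∑ v : V2, g v • (-(Pi.single v.1 1) : V → ℚ) = 0 := by
      rw [← hQx, hx0, mulVec_zero]
    have h2 : ∑ v : V2, g v * ((-(Pi.single v.1 1) : V → ℚ) i.1) = 0 := by
      have := congrFun hsum0 i.1
      rw [Finset.sum_apply, Pi.zero_apply] at this
      rw [← this]
      exact Finset.sum_congr rfl (fun v _ => rfl)
    have h3 : ∀ v : V2, g v * ((-(Pi.single v.1 1) : V → ℚ) i.1) = if v = i then -(g v) else 0 := by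
      intro v
      simp only [Pi.neg_apply, Pi.single_apply]
      by_cases h : v = i
      · subst h; simp
      · have hvi : ¬ (i.1 = v.1) := fun hh => h (Subtype.ext hh.symm)
        simp [hvi, h]
    rw [Finset.sum_congr rfl (fun v _ => h3 v),
      Finset.sum_ite_eq' Finset.univ i (fun v : V2 => -(g v))] at h2
    simpa using h2
  refine ⟨lin, ?_⟩
  intro y hy
  have h1 : ∃ l' : V → ℚ, (fun w : V2 => l' w.1) = y ∧ zcoef A (deg G) l' ≠ 0 := by
    by_contra h
    push_neg at h
    apply hy
    rw [zred]
    apply finsum_eq_zero_of_forall_eq_zero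
    intro l'
    by_cases hc : (fun w : V2 => l' w.1) = y
    · rw [if_pos hc, h l' hc]
    · rw [if_neg hc]
  obtain ⟨l', hl', hz⟩ := h1
  have h2 : ∃ k : V → ℕ, (∑ v, (k v : ℚ) • Estar A v) = l' := by
    by_contra h
    push_neg at h
    apply hz
    rw [zcoef]
    apply finsum_eq_zero_of_forall_eq_zero
    intro k
    rw [if_neg (h k)]
  obtain ⟨k, hk⟩ := h2
  choose s hs0 hs using fun v : V => key_nonneg_combo5 A hoff hAneg V2 v
  set r : V2 → ℚ := fun w => ∑ v : V, (k v : ℚ) * s v w with hrdef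
  have hr0 : ∀ w, 0 ≤ r w := by
    intro w
    apply Finset.sum_nonneg
    intro v _
    exact mul_nonneg (by positivity) (hs0 v w)
  have hyr : y = ∑ v : V2, r v • fun w : V2 => Estar A v.1 w.1 := by
    funext u
    have hyu : y u = l' u.1 := (congrFun hl' u).symm
    have hlu : l' u.1 = ∑ v : V, (k v : ℚ) * Estar A v u.1 := by
      rw [← hk, Finset.sum_apply]
      exact Finset.sum_congr rfl (fun v _ => rfl)
    calc y u = ∑ v : V, (k v : ℚ) * Estar A v u.1 := by rw [hyu, hlu]
      _ = ∑ v : V, (k v : ℚ) * ∑ w : V2, s v w * Estar A w.1 u.1 :=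
        Finset.sum_congr rfl (fun v _ => by rw [hs v u])
      _ = ∑ v : V, ∑ w : V2, (k v : ℚ) * s v w * Estar A w.1 u.1 :=
        Finset.sum_congr rfl (fun v _ => by
          rw [Finset.mul_sum]
          exact Finset.sum_congr rfl (fun w _ => by ring))
      _ = ∑ w : V2, ∑ v : V, (k v : ℚ) * s v w * Estar A w.1 u.1 := Finset.sum_comm
      _ = ∑ w : V2, r w * Estar A w.1 u.1 :=
        Finset.sum_congr rfl (fun w _ => by rw [hrdef, Finset.sum_mul])
      _ = (∑ v : V2, r v • fun w : V2 => Estar A v.1 w.1) u := by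
        rw [Finset.sum_apply]
        exact Finset.sum_congr rfl (fun w _ => rfl)
  refine ⟨r, ⟨hr0, hyr⟩, ?_⟩
  rintro r' ⟨_, hr'⟩
  have hdiff : ∑ v : V2, (r' v - r v) • (fun w : V2 => Estar A v.1 w.1) = 0 := by
    have : ∑ v : V2, (r' v - r v) • (fun w : V2 => Estar A v.1 w.1)
        = (∑ v : V2, r' v • fun w : V2 => Estar A v.1 w.1)
          - (∑ v : V2, r v • fun w : V2 => Estar A v.1 w.1) := by
      rw [← Finset.sum_sub_distrib]
      exact Finset.sum_congr rfl (fun v _ => by rw [sub_smul])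
    rw [this, ← hr', ← hyr, sub_self]
  have hz0 := Fintype.linearIndependent_iff.1 lin (fun v => r' v - r v) hdiff
  funext w
  have h : r' w - r w = 0 := hz0 w
  linarith
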